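/- Let p ∈ [1,2]. There exists a sequence (x^{(j)})_{j≥1} in the real space ℓ_p such that the series ∑_j x^{(j)} is unconditionally summable (the family is summable) and ∑_{j=1}^∞ ‖x^{(j)}‖_p^{2−ε} = ∞ for every ε > 0. -/

import Mathlib

open scoped ENNReal
open Finset

namespace DRaux




abbrev G (k : ℕ) := Fin (k * k) → ZMod 2

noncomputable def chi (x : ZMod 2) : ℝ := if x = 1 then -1 else 1

lemma zmod2_cases (x : ZMod 2) : x = 0 ∨ x = 1 := by revert x; decide

lemma chi_zero : chi 0 = 1 := by norm_num [chi]

lemma chi_add (x y : ZMod 2) : chi (x + y) = chi x * chi y := by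
  rcases zmod2_cases x with hx | hx <;> rcases zmod2_cases y with hy | hy <;>
    subst hx <;> subst hy <;>
      norm_num [chi, show ((1:ZMod 2) + 1) = 0 by decide, show ((0:ZMod 2)) ≠ 1 by decide,
        show ((2:ZMod 2)) ≠ 1 by decide]

lemma abs_chi (x : ZMod 2) : |chi x| = 1 := by
  rcases zmod2_cases x with hx | hx <;> subst hx <;> norm_num [chi]

noncomputable def W (k : ℕ) (i c : G k) : ℝ := ∏ b, chi (i b * c b)

lemma abs_W (k : ℕ) (i c : G k) : |W k i c| = 1 := by
  rw [W, Finset.abs_prod]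
  simp [abs_chi]

lemma W_add_right (k : ℕ) (i c c' : G k) : W k i (c + c') = W k i c * W k i c' := by
  unfold W
  rw [← Finset.prod_mul_distrib]
  refine Finset.prod_congr rfl fun b _ => ?_
  rw [Pi.add_apply, mul_add, chi_add]

lemma W_add_left (k : ℕ) (i i' c : G k) : W k (i + i') c = W k i c * W k i' c := by
  unfold W
  rw [← Finset.prod_mul_distrib]
  refine Finset.prod_congr rfl fun b _ => ?_
  rw [Pi.add_apply, add_mul, chi_add]

lemma card_G (k : ℕ) : (Fintype.card (G k)) = 2 ^ (k * k) := by
  rw [Fintype.card_fun, ZMod.card, Fintype.card_fin]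

lemma sum_W (k : ℕ) (d : G k) :
    ∑ c : G k, W k d c = if d = 0 then ((2 : ℝ) ^ (k * k)) else 0 := by
  by_cases hd : d = 0
  · subst hd
    rw [if_pos rfl]
    have : ∀ c : G k, W k 0 c = 1 := by
      intro c; unfold W; simp [chi_zero]
    simp only [this, Finset.sum_const, Finset.card_univ, nsmul_eq_mul, mul_one, card_G]
    push_cast; ring
  · rw [if_neg hd]
    obtain ⟨b₀, hb₀⟩ : ∃ b, d b ≠ 0 := by
      by_contra h
      push_neg at h
      exact hd (funext h)
    have hdb : d b₀ = 1 := (zmod2_cases (d b₀)).resolve_left hb₀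
    set u : G k := Pi.single b₀ 1 with hu
    have htrans : ∑ c : G k, W k d (c + u) = ∑ c : G k, W k d c :=
      Fintype.sum_bijective (· + u) (Equiv.addRight u).bijective _ _ (fun c => rfl)
    have hWu : W k d u = -1 := by
      unfold W
      rw [Finset.prod_eq_single b₀]
      · rw [hu, Pi.single_eq_same, hdb]; norm_num [chi]
      · intro b _ hb
        rw [hu, Pi.single_eq_of_ne hb, mul_zero, chi_zero]
      · simp
    have : ∑ c : G k, W k d c = -∑ c : G k, W k d c := by
      conv_lhs => rw [← htrans]
      rw [← Finset.sum_neg_distrib]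
      refine Finset.sum_congr rfl fun c _ => ?_
      rw [W_add_right, hWu]; ring
    linarith

lemma add_eq_zero_iff_eq (k : ℕ) (i i' : G k) : i + i' = 0 ↔ i' = i := by
  constructor
  · intro h
    funext b
    have hb := congrFun h b
    have : ∀ x y : ZMod 2, x + y = 0 → y = x := by decide
    exact this _ _ hb
  · rintro rfl
    funext b
    have : ∀ x : ZMod 2, x + x = 0 := by decide
    exact this _

lemma orth (k : ℕ) (S : Finset (G k)) :
    ∑ c : G k, (∑ i ∈ S, W k i c) ^ 2 = (S.card : ℝ) * 2 ^ (k * k) := by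
  have h2 : ∀ c : G k, (∑ i ∈ S, W k i c) ^ 2 = ∑ i ∈ S, ∑ i' ∈ S, W k i c * W k i' c := by
    intro c; rw [sq, Finset.sum_mul_sum]
  simp only [h2]
  rw [Finset.sum_comm]
  have hinner : ∀ i ∈ S, (∑ c : G k, ∑ i' ∈ S, W k i c * W k i' c)
      = if i ∈ S then ((2:ℝ) ^ (k*k)) else 0 := by
    intro i hi
    rw [Finset.sum_comm]
    have : ∀ i' ∈ S, ∑ c : G k, W k i c * W k i' c = if i' = i then ((2:ℝ)^(k*k)) else 0 := by
      intro i' _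
      have : ∀ c : G k, W k i c * W k i' c = W k (i + i') c := fun c => (W_add_left k i i' c).symm
      simp only [this, sum_W, add_eq_zero_iff_eq]
    rw [Finset.sum_congr rfl this, Finset.sum_ite_eq' S i (fun _ => ((2:ℝ)^(k*k)))]
  rw [Finset.sum_congr rfl hinner]
  simp [Finset.sum_ite_eq]


lemma jensen {ι : Type*} [Fintype ι] [Nonempty ι] {pr : ℝ} (h1 : 1 ≤ pr) (h2 : pr ≤ 2)
    (v : ι → ℝ) :
    ∑ c, |v c| ^ pr ≤
      (Fintype.card ι : ℝ) ^ (1 - pr / 2) * (∑ c, (v c) ^ 2) ^ (pr / 2) := by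
  have hpr0 : 0 < pr := lt_of_lt_of_le one_pos h1
  set n : ℝ := (Fintype.card ι : ℝ) with hn
  have hn0 : 0 < n := by
    rw [hn]; exact_mod_cast Fintype.card_pos
  set A : ℝ := ∑ c, |v c| ^ pr with hA
  set B : ℝ := ∑ c, (v c) ^ 2 with hB
  have hAnn : 0 ≤ A := Finset.sum_nonneg fun c _ => Real.rpow_nonneg (abs_nonneg _) _
  have hBnn : 0 ≤ B := Finset.sum_nonneg fun c _ => sq_nonneg _
  have hq : (1:ℝ) ≤ 2 / pr := by
    rw [le_div_iff₀ hpr0]; linarith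
  have key := Real.rpow_arith_mean_le_arith_mean_rpow Finset.univ (fun _ => 1 / n)
    (fun c => |v c| ^ pr) (fun _ _ => by positivity)
    (by
      rw [Finset.sum_const, Finset.card_univ, nsmul_eq_mul, mul_one_div, ← hn,
        div_self hn0.ne'])
    (fun c _ => Real.rpow_nonneg (abs_nonneg _) _) hq
  have hrw : ∀ c : ι, (|v c| ^ pr) ^ (2 / pr) = (v c) ^ 2 := by
    intro c
    rw [← sq_abs (v c), ← Real.rpow_natCast |v c| 2, ← Real.rpow_mul (abs_nonneg _)]
    congr 1
    push_cast
    field_simp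
  simp only [hrw] at key
  rw [← Finset.mul_sum, ← hA] at key
  rw [← Finset.mul_sum, ← hB] at key
  -- key : (1/n * A) ^ (2/pr) ≤ 1/n * B
  have hX : (0:ℝ) ≤ 1 / n * A := by positivity
  have step : 1 / n * A ≤ (1 / n * B) ^ (pr / 2) := by
    have h1' := Real.rpow_le_rpow (Real.rpow_nonneg hX _) key (by positivity : (0:ℝ) ≤ pr / 2)
    rwa [← Real.rpow_mul hX, div_mul_div_comm, mul_comm (2:ℝ) pr, div_self (by positivity),
      Real.rpow_one] at h1'
  have : A ≤ n * (1 / n * B) ^ (pr / 2) := by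
    calc A = n * (1 / n * A) := by field_simp
    _ ≤ n * (1 / n * B) ^ (pr / 2) := by
        exact mul_le_mul_of_nonneg_left step hn0.le
  refine this.trans (le_of_eq ?_)
  rw [Real.mul_rpow (by positivity) hBnn, ← mul_assoc]
  congr 1
  rw [one_div, ← Real.rpow_neg_one n, ← Real.rpow_mul hn0.le]
  nth_rewrite 1 [← Real.rpow_one n]
  rw [← Real.rpow_add hn0]
  congr 1
  ring

lemma geom_tail (K : ℕ) (Ks : Finset ℕ) (hKs : ∀ k ∈ Ks, K ≤ k) :
    ∑ k ∈ Ks, ((1:ℝ) / 2) ^ k ≤ ((1:ℝ) / 2) ^ K * 2 := by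
  have hsum : ∑ k ∈ Ks, ((1:ℝ) / 2) ^ k
      = ((1:ℝ)/2) ^ K * ∑ j ∈ Ks.image (· - K), ((1:ℝ) / 2) ^ j := by
    have hinj : ∀ x ∈ Ks, ∀ y ∈ Ks, x - K = y - K → x = y := by
      intro x hx y hy h
      have := hKs x hx; have := hKs y hy; omega
    rw [Finset.mul_sum, Finset.sum_image hinj]
    refine Finset.sum_congr rfl fun k hk => ?_
    rw [← pow_add]
    congr 1
    have := hKs k hk; omega
  rw [hsum]
  have : ∑ j ∈ Ks.image (· - K), ((1:ℝ) / 2) ^ j ≤ ∑' j : ℕ, ((1:ℝ)/2) ^ j := by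
    refine Summable.sum_le_tsum _ (fun i _ => by positivity) ?_
    exact summable_geometric_of_lt_one (by norm_num) (by norm_num)
  have htsum : ∑' j : ℕ, ((1:ℝ)/2) ^ j = 2 := by
    rw [tsum_geometric_of_lt_one (by norm_num) (by norm_num)]; norm_num
  rw [htsum] at this
  exact mul_le_mul_of_nonneg_left this (by positivity)


abbrev I : Type := (k : ℕ) × G k

instance : Infinite I :=
  Infinite.of_injective (fun k => (⟨k, 0⟩ : I)) (fun a b h => congrArg Sigma.fst h)

noncomputable def a (pr : ℝ) (k : ℕ) : ℝ :=
  (2 : ℝ) ^ (-(k : ℝ) - ((k * k : ℕ) : ℝ) * (1 / pr + 1 / 2))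

lemma a_pos (pr : ℝ) (k : ℕ) : 0 < a pr k := Real.rpow_pos_of_pos (by norm_num) _

noncomputable def delta (k : ℕ) : ℝ := (2 : ℝ) ^ (-(k : ℝ) - ((k * k : ℕ) : ℝ) / 2)

lemma delta_pos (k : ℕ) : 0 < delta k := Real.rpow_pos_of_pos (by norm_num) _

noncomputable def row (pr : ℝ) (k : ℕ) (i : G k) : I → ℝ :=
  Function.extend (Sigma.mk k) (fun c => a pr k * W k i c) 0

def blockFinset (k : ℕ) : Finset I := Finset.univ.map ⟨Sigma.mk k, sigma_mk_injective⟩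

lemma mem_blockFinset {k : ℕ} {τ : I} : τ ∈ blockFinset k ↔ ∃ c : G k, (⟨k, c⟩ : I) = τ := by
  simp [blockFinset]

lemma row_apply (pr : ℝ) (k : ℕ) (i c : G k) :
    row pr k i ⟨k, c⟩ = a pr k * W k i c :=
  sigma_mk_injective.extend_apply _ _ _

lemma row_eq_zero (pr : ℝ) (k : ℕ) (i : G k) {τ : I} (h : τ ∉ blockFinset k) :
    row pr k i τ = 0 := by
  have : ¬∃ c : G k, (⟨k, c⟩ : I) = τ := fun hc => h (mem_blockFinset.2 hc)
  exact Function.extend_apply' _ _ _ this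

lemma tsum_block {pr : ℝ} (hpr0 : 0 < pr) (e : ℕ ≃ I) (k : ℕ) (F : I → ℝ)
    (hF : ∀ τ ∉ blockFinset k, F τ = 0) :
    ∑' n₀ : ℕ, |F (e n₀)| ^ pr = ∑ c : G k, |F ⟨k, c⟩| ^ pr := by
  rw [Equiv.tsum_eq e (fun τ => |F τ| ^ pr)]
  rw [tsum_eq_sum (s := blockFinset k)
    (fun τ hτ => by rw [hF τ hτ, abs_zero, Real.zero_rpow hpr0.ne'])]
  rw [blockFinset, Finset.sum_map]
  rfl

lemma summable_block {pr : ℝ} (hpr0 : 0 < pr) (e : ℕ ≃ I) (k : ℕ) (F : I → ℝ)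
    (hF : ∀ τ ∉ blockFinset k, F τ = 0) :
    Summable fun n₀ : ℕ => ‖F (e n₀)‖ ^ pr := by
  refine summable_of_ne_finset_zero (s := (blockFinset k).image e.symm) fun n hn => ?_
  have he : e n ∉ blockFinset k := by
    intro hmem
    exact hn (by simpa using Finset.mem_image_of_mem e.symm hmem)
  rw [hF _ he, norm_zero, Real.zero_rpow hpr0.ne']



lemma two_rpow_mul (x y : ℝ) : ((2:ℝ) ^ x) ^ y = (2:ℝ) ^ (x * y) :=
  (Real.rpow_mul (by norm_num) x y).symm

lemma two_rpow_add (x y : ℝ) : (2:ℝ) ^ x * (2:ℝ) ^ y = (2:ℝ) ^ (x + y) :=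
  (Real.rpow_add (by norm_num) x y).symm

lemma two_rpow_neg_nat (k : ℕ) : (2:ℝ) ^ (-(k:ℝ)) = ((1:ℝ)/2) ^ k := by
  rw [Real.rpow_neg (by norm_num), Real.rpow_natCast, one_div, inv_pow]

lemma cast_two_pow (m : ℕ) : ((2 ^ m : ℕ) : ℝ) = (2:ℝ) ^ (m:ℝ) := by
  rw [Real.rpow_natCast]
  norm_cast

theorem aux (p : ℝ≥0∞) [Fact (1 ≤ p)] (hp2 : p ≤ 2) (e : ℕ ≃ I) :
    ∃ x : ℕ → lp (fun _ : ℕ => ℝ) p,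
      Summable x ∧ ∀ ε : ℝ, 0 < ε → ¬ Summable (fun j : ℕ => ‖x j‖ ^ (2 - ε)) := by
  have hptop : p ≠ ⊤ := by
    intro h
    rw [h] at hp2
    have h2 : (2:ℝ≥0∞) = ⊤ := top_le_iff.1 hp2
    simp at h2
  have hpr1 : 1 ≤ p.toReal := by
    rw [← ENNReal.toReal_one]
    exact ENNReal.toReal_mono hptop (Fact.out)
  have hpr2 : p.toReal ≤ 2 := by
    have := ENNReal.toReal_mono (by norm_num : (2:ℝ≥0∞) ≠ ⊤) hp2
    simpa using this
  set pr := p.toReal with hpr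
  have hpr0 : 0 < pr := one_pos.trans_le hpr1
  have hmem : ∀ σ : I, Memℓp (fun n => row pr σ.1 σ.2 (e n)) p :=
    fun σ => memℓp_gen (summable_block hpr0 e σ.1 _ (fun τ h => row_eq_zero pr _ _ h))
  set xe : I → lp (fun _ : ℕ => ℝ) p := fun σ => ⟨fun n => row pr σ.1 σ.2 (e n), hmem σ⟩
    with hxe
  -- norm of a sub-block sum
  have normBlock : ∀ (k : ℕ) (S : Finset (G k)), ‖∑ i ∈ S, xe ⟨k, i⟩‖ ≤ ((1:ℝ)/2) ^ k := by
    intro k S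
    set mc : ℝ := ((k * k : ℕ) : ℝ) with hmc
    set A : ℝ := -(k : ℝ) - mc * (1 / pr + 1 / 2) with hA
    have haA : a pr k = (2:ℝ) ^ A := by rw [hA, hmc]; rfl
    set F : I → ℝ := fun τ => ∑ i ∈ S, row pr k i τ with hF
    have hF0 : ∀ τ ∉ blockFinset k, F τ = 0 :=
      fun τ h => Finset.sum_eq_zero fun i _ => row_eq_zero pr _ _ h
    have hco : ∀ n : ℕ, (↑(∑ i ∈ S, xe ⟨k, i⟩) : ∀ _ : ℕ, ℝ) n = F (e n) := by
      intro n
      rw [lp.coeFn_sum, Finset.sum_apply]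
    rw [lp.norm_eq_tsum_rpow hpr0]
    have htsum : (∑' n : ℕ, ‖(↑(∑ i ∈ S, xe ⟨k, i⟩) : ∀ _ : ℕ, ℝ) n‖ ^ pr)
        = ∑ c : G k, |F ⟨k, c⟩| ^ pr := by
      rw [tsum_congr (fun n => by rw [hco n, Real.norm_eq_abs])]
      exact tsum_block hpr0 e k F hF0
    rw [htsum]
    have hval : ∀ c : G k, F ⟨k, c⟩ = a pr k * ∑ i ∈ S, W k i c := by
      intro c
      show ∑ i ∈ S, row pr k i ⟨k, c⟩ = _
      calc ∑ i ∈ S, row pr k i ⟨k, c⟩ = ∑ i ∈ S, a pr k * W k i c :=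
            Finset.sum_congr rfl fun i _ => row_apply pr k i c
        _ = a pr k * ∑ i ∈ S, W k i c := (Finset.mul_sum _ _ _).symm
    set v : G k → ℝ := fun c => ∑ i ∈ S, W k i c with hv
    have h1 : ∑ c : G k, |F ⟨k, c⟩| ^ pr = (2:ℝ) ^ (A * pr) * ∑ c, |v c| ^ pr := by
      rw [← two_rpow_mul, Finset.mul_sum]
      refine Finset.sum_congr rfl fun c _ => ?_
      rw [hval c, abs_mul, abs_of_pos (a_pos pr k),
        Real.mul_rpow (a_pos pr k).le (abs_nonneg _), haA]
    have hcardG : ((Fintype.card (G k)) : ℝ) = (2:ℝ) ^ mc := by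
      rw [card_G, hmc]
      exact cast_two_pow (k*k)
    have hsq : ∑ c : G k, (v c) ^ 2 ≤ (2:ℝ) ^ (mc + mc) := by
      rw [orth k S, ← two_rpow_add]
      have h2m : ((2:ℝ)) ^ ((k*k : ℕ)) = (2:ℝ) ^ mc := by
        rw [hmc, Real.rpow_natCast]
      rw [h2m]
      refine mul_le_mul_of_nonneg_right ?_ (by positivity)
      rw [← hcardG]
      exact_mod_cast Finset.card_le_card (Finset.subset_univ S) |>.trans
        (le_of_eq Finset.card_univ)
    have h2 : ∑ c, |v c| ^ pr
        ≤ (2:ℝ) ^ (mc * (1 - pr/2)) * (2:ℝ) ^ ((mc + mc) * (pr/2)) := by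
      refine (jensen hpr1 hpr2 v).trans ?_
      rw [hcardG, two_rpow_mul]
      refine mul_le_mul_of_nonneg_left ?_ (by positivity)
      calc (∑ c, (v c) ^ 2) ^ (pr/2)
          ≤ ((2:ℝ) ^ (mc + mc)) ^ (pr/2) :=
            Real.rpow_le_rpow (Finset.sum_nonneg fun c _ => sq_nonneg _) hsq (by positivity)
        _ = (2:ℝ) ^ ((mc + mc) * (pr/2)) := two_rpow_mul _ _
    have hEsum : ∑ c : G k, |F ⟨k, c⟩| ^ pr
        ≤ (2:ℝ) ^ (A * pr + (mc * (1 - pr/2) + (mc + mc) * (pr/2))) := by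
      rw [h1, ← two_rpow_add, ← two_rpow_add]
      exact mul_le_mul_of_nonneg_left h2 (by positivity)
    have hnn : 0 ≤ ∑ c : G k, |F ⟨k, c⟩| ^ pr :=
      Finset.sum_nonneg fun c _ => Real.rpow_nonneg (abs_nonneg _) _
    calc (∑ c : G k, |F ⟨k, c⟩| ^ pr) ^ (1/pr)
        ≤ ((2:ℝ) ^ (A * pr + (mc * (1 - pr/2) + (mc + mc) * (pr/2)))) ^ (1/pr) :=
          Real.rpow_le_rpow hnn hEsum (by positivity)
      _ = (2:ℝ) ^ ((A * pr + (mc * (1 - pr/2) + (mc + mc) * (pr/2))) * (1/pr)) :=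
          two_rpow_mul _ _
      _ = (2:ℝ) ^ (-(k:ℝ)) := by
          congr 1
          rw [hA]
          field_simp
          ring
      _ = ((1:ℝ)/2) ^ k := two_rpow_neg_nat k
  -- exact norm of a single vector
  have normSingle : ∀ σ : I, ‖xe σ‖ = delta σ.1 := by
    rintro ⟨k, i⟩
    set mc : ℝ := ((k * k : ℕ) : ℝ) with hmc
    set A : ℝ := -(k : ℝ) - mc * (1 / pr + 1 / 2) with hA
    have haA : a pr k = (2:ℝ) ^ A := by rw [hA, hmc]; rfl
    have hco : ∀ n : ℕ, (↑(xe ⟨k, i⟩) : ∀ _ : ℕ, ℝ) n = row pr k i (e n) := fun n => rfl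
    rw [lp.norm_eq_tsum_rpow hpr0]
    have htsum : (∑' n : ℕ, ‖(↑(xe ⟨k, i⟩) : ∀ _ : ℕ, ℝ) n‖ ^ pr)
        = ∑ c : G k, |row pr k i ⟨k, c⟩| ^ pr := by
      rw [tsum_congr (fun n => by rw [hco n, Real.norm_eq_abs])]
      exact tsum_block hpr0 e k _ (fun τ h => row_eq_zero pr _ _ h)
    rw [htsum]
    have hterm : ∀ c : G k, |row pr k i ⟨k, c⟩| ^ pr = (2:ℝ) ^ (A * pr) := by
      intro c
      rw [row_apply, abs_mul, abs_of_pos (a_pos pr k), abs_W, mul_one, haA, two_rpow_mul]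
    rw [Finset.sum_congr rfl (fun c _ => hterm c), Finset.sum_const, Finset.card_univ,
      nsmul_eq_mul]
    have hcardG : ((Fintype.card (G k)) : ℝ) = (2:ℝ) ^ mc := by
      rw [card_G, hmc]
      exact cast_two_pow (k*k)
    rw [hcardG, two_rpow_add, two_rpow_mul, delta]
    congr 1
    rw [hA, ← hmc, ← hpr]
    field_simp
    ring
  refine ⟨fun j => xe (e j), ?_, ?_⟩
  · -- summability
    rw [summable_iff_vanishing_norm]
    intro ε hε
    obtain ⟨K, hK⟩ := exists_pow_lt_of_lt_one (by linarith : (0:ℝ) < ε/2)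
      (by norm_num : (1:ℝ)/2 < 1)
    refine ⟨((Finset.range K).sigma fun k => (Finset.univ : Finset (G k))).image e.symm,
      fun t ht => ?_⟩
    set T : Finset I := t.image e with hT
    have hsum1 : ∑ j ∈ t, xe (e j) = ∑ σ ∈ T, xe σ :=
      (Finset.sum_image (fun x _ y _ h => e.injective h)).symm
    set Ks : Finset ℕ := T.image Sigma.fst with hKs
    have hsum2 : ∑ σ ∈ T, xe σ
        = ∑ k ∈ Ks, ∑ σ ∈ T.filter (fun σ => σ.1 = k), xe σ :=
      (Finset.sum_fiberwise_of_maps_to (fun σ hσ => Finset.mem_image_of_mem _ hσ) _).symm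
    have hKbig : ∀ k ∈ Ks, K ≤ k := by
      intro k hk
      by_contra hlt
      push_neg at hlt
      obtain ⟨σ, hσT, hσ1⟩ := Finset.mem_image.1 hk
      obtain ⟨j, hjt, hje⟩ := Finset.mem_image.1 hσT
      have hmem : j ∈ ((Finset.range K).sigma fun k => (Finset.univ : Finset (G k))).image
          e.symm := by
        refine Finset.mem_image.2 ⟨σ, ?_, by rw [← hje, Equiv.symm_apply_apply]⟩
        refine Finset.mem_sigma.2 ⟨?_, Finset.mem_univ _⟩
        rw [hσ1]
        exact Finset.mem_range.2 hlt
      exact (Finset.disjoint_left.1 ht hjt) hmem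
    have hblockbound : ∀ k ∈ Ks, ‖∑ σ ∈ T.filter (fun σ => σ.1 = k), xe σ‖ ≤ ((1:ℝ)/2) ^ k := by
      intro k _
      have hfil : T.filter (fun σ => σ.1 = k)
          = (Finset.univ.filter fun i : G k => (⟨k, i⟩ : I) ∈ T).image (Sigma.mk k) := by
        ext ⟨k', c⟩
        simp only [Finset.mem_filter, Finset.mem_image, Finset.mem_univ, true_and]
        constructor
        · rintro ⟨hmem, h⟩
          subst h
          exact ⟨c, hmem, rfl⟩
        · rintro ⟨i, hi, hEq⟩
          cases hEq
          exact ⟨hi, rfl⟩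
      rw [hfil, Finset.sum_image (fun x _ y _ h => sigma_mk_injective h)]
      exact normBlock k _
    rw [hsum1, hsum2]
    calc ‖∑ k ∈ Ks, ∑ σ ∈ T.filter (fun σ => σ.1 = k), xe σ‖
        ≤ ∑ k ∈ Ks, ‖∑ σ ∈ T.filter (fun σ => σ.1 = k), xe σ‖ := norm_sum_le _ _
      _ ≤ ∑ k ∈ Ks, ((1:ℝ)/2) ^ k := Finset.sum_le_sum hblockbound
      _ ≤ ((1:ℝ)/2) ^ K * 2 := geom_tail K Ks hKbig
      _ < ε := by
          rw [show ε = ε/2*2 by ring]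
          exact mul_lt_mul_of_pos_right hK (by norm_num)
  · -- divergence
    intro ε hε hS
    set q : ℝ := 2 - ε with hq
    set C : ℝ := ∑' j : ℕ, ‖xe (e j)‖ ^ q with hC
    have hnn : ∀ j : ℕ, 0 ≤ ‖xe (e j)‖ ^ q := fun j => Real.rpow_nonneg (norm_nonneg _) _
    have hblocklow : ∀ k : ℕ, (2:ℝ) ^ (((k*k : ℕ) : ℝ) + (-(k:ℝ) - ((k*k:ℕ):ℝ)/2) * q) ≤ C := by
      intro k
      have hFk : ∑ j ∈ (blockFinset k).image e.symm, ‖xe (e j)‖ ^ q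
          = (2:ℝ) ^ (((k*k:ℕ):ℝ) + (-(k:ℝ) - ((k*k:ℕ):ℝ)/2) * q) := by
        rw [Finset.sum_image (fun x _ y _ h => e.symm.injective h)]
        have : ∀ τ ∈ blockFinset k, ‖xe (e (e.symm τ))‖ ^ q = (delta k) ^ q := by
          intro τ hτ
          rw [Equiv.apply_symm_apply, normSingle]
          obtain ⟨c, rfl⟩ := mem_blockFinset.1 hτ
          rfl
        rw [Finset.sum_congr rfl this, Finset.sum_const, nsmul_eq_mul]
        rw [blockFinset, Finset.card_map, Finset.card_univ, card_G, cast_two_pow]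
        rw [delta, two_rpow_mul, two_rpow_add]
      rw [← hFk]
      exact Summable.sum_le_tsum _ (fun j _ => hnn j) hS
    obtain ⟨k₁, hk₁⟩ := pow_unbounded_of_one_lt C (by norm_num : (1:ℝ) < 2)
    obtain ⟨k₂, hk₂⟩ := exists_nat_ge ((6:ℝ)/ε)
    set k := max k₁ k₂ with hk
    have hk₂' : (6:ℝ)/ε ≤ (k:ℝ) := hk₂.trans (by exact_mod_cast le_max_right k₁ k₂)
    have hkε : (6:ℝ) ≤ (k:ℝ) * ε := (div_le_iff₀ hε).1 hk₂'
    have hβ : (k:ℝ) ≤ ((k*k : ℕ) : ℝ) + (-(k:ℝ) - ((k*k:ℕ):ℝ)/2) * q := by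
      push_cast
      rw [hq]
      have hk0 : (0:ℝ) ≤ (k:ℝ) := Nat.cast_nonneg k
      nlinarith [mul_le_mul_of_nonneg_left hkε hk0]
    have h2k : (2:ℝ) ^ (k:ℝ) ≤ (2:ℝ) ^ (((k*k : ℕ) : ℝ) + (-(k:ℝ) - ((k*k:ℕ):ℝ)/2) * q) :=
      (Real.rpow_le_rpow_left_iff (by norm_num)).2 hβ
    have h2k' : (C:ℝ) < (2:ℝ) ^ (k:ℝ) := by
      rw [Real.rpow_natCast]
      calc C < 2 ^ k₁ := hk₁
        _ ≤ 2 ^ k := pow_le_pow_right₀ (by norm_num) (le_max_left k₁ k₂)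
    linarith [hblocklow k]

end DRaux

open DRaux in
/-- **Dvoretzky–Rogers-type statement for the real space `ℓ_p`, `1 ≤ p ≤ 2`.**
There is an unconditionally summable sequence `(x⁽ʲ⁾)` in `ℓ_p(ℝ)` with
`∑_j ‖x⁽ʲ⁾‖^{2-ε} = ∞` for every `ε > 0`. -/
theorem exists_summable_not_rpow_summable_real
    (p : ℝ≥0∞) [Fact (1 ≤ p)] (hp2 : p ≤ 2) :
    ∃ x : ℕ → lp (fun _ : ℕ => ℝ) p,
      Summable x ∧ ∀ ε : ℝ, 0 < ε → ¬ Summable (fun j : ℕ => ‖x j‖ ^ (2 - ε)) := by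
  obtain ⟨d⟩ := nonempty_denumerable I
  exact aux p hp2 (@Denumerable.eqv I d).symm
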